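/- Let n ≥ 1 and T > 0. Let β : ℝⁿ → ℝⁿ be a C¹ divergence-free vector field, and let ϖ : ℝ × ℝⁿ → ℝ be a C¹ function satisfying ∂ₜϖ(t,x) + β(x)·∇ₓϖ(t,x) = 0 for all (t,x). Let v : ℝ × ℝⁿ → ℝ be C¹ and suppose there is a compact set K ⊆ ℝⁿ with v(t,x) = 0 whenever t ∈ [0,T] and x ∉ K. Then ∫₀ᵀ ∫_{ℝⁿ} ( ∂ₜv(t,x) + β(x)·∇ₓv(t,x) )·ϖ(t,x)²·v(t,x) dx dt = ½·∫_{ℝⁿ} ϖ(T,x)²·v(T,x)² dx − ½·∫_{ℝⁿ} ϖ(0,x)²·v(0,x)² dx. -/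

import Mathlib

open MeasureTheory

/-- Time partial derivative of a function of (t, x). -/
noncomputable def partialT {n : ℕ}
    (v : ℝ × EuclideanSpace ℝ (Fin n) → ℝ)
    (t : ℝ) (x : EuclideanSpace ℝ (Fin n)) : ℝ :=
  deriv (fun s => v (s, x)) t

/-- Convective spatial derivative β·∇ₓv = ∑ᵢ βᵢ ∂_{xᵢ}v of a function of (t, x). -/
noncomputable def betaGrad {n : ℕ}
    (β : EuclideanSpace ℝ (Fin n) → EuclideanSpace ℝ (Fin n))
    (v : ℝ × EuclideanSpace ℝ (Fin n) → ℝ)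
    (t : ℝ) (x : EuclideanSpace ℝ (Fin n)) : ℝ :=
  ∑ i, β x i * fderiv ℝ (fun y => v (t, y)) x (EuclideanSpace.single i 1)

section helpers

variable {n : ℕ}

lemma hasDerivAt_sliceT {f : ℝ × EuclideanSpace ℝ (Fin n) → ℝ} (hf : ContDiff ℝ 1 f)
    (t : ℝ) (x : EuclideanSpace ℝ (Fin n)) :
    HasDerivAt (fun s => f (s, x)) (fderiv ℝ f (t, x) (1, 0)) t := by
  have h1 : HasDerivAt (fun s : ℝ => (s, x)) ((1:ℝ), (0 : EuclideanSpace ℝ (Fin n))) t :=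
    (hasDerivAt_id t).prodMk (hasDerivAt_const t x)
  exact ((hf.differentiable one_ne_zero) (t, x)).hasFDerivAt.comp_hasDerivAt t h1

lemma partialT_eq_fderiv {f : ℝ × EuclideanSpace ℝ (Fin n) → ℝ} (hf : ContDiff ℝ 1 f)
    (t : ℝ) (x : EuclideanSpace ℝ (Fin n)) :
    partialT f t x = fderiv ℝ f (t, x) (1, 0) :=
  (hasDerivAt_sliceT hf t x).deriv

lemma fderiv_sliceX {f : ℝ × EuclideanSpace ℝ (Fin n) → ℝ} (hf : ContDiff ℝ 1 f)
    (t : ℝ) (x : EuclideanSpace ℝ (Fin n)) (e : EuclideanSpace ℝ (Fin n)) :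
    fderiv ℝ (fun y => f (t, y)) x e = fderiv ℝ f (t, x) (0, e) := by
  have h2 : HasFDerivAt (fun y : EuclideanSpace ℝ (Fin n) => (t, y))
      ((0 : EuclideanSpace ℝ (Fin n) →L[ℝ] ℝ).prod (ContinuousLinearMap.id ℝ _)) x :=
    (hasFDerivAt_const t x).prodMk (hasFDerivAt_id x)
  have h3 : HasFDerivAt (fun y => f (t, y))
      ((fderiv ℝ f (t, x)).comp
        ((0 : EuclideanSpace ℝ (Fin n) →L[ℝ] ℝ).prod (ContinuousLinearMap.id ℝ _))) x :=
    ((hf.differentiable one_ne_zero) (t, x)).hasFDerivAt.comp x h2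
  rw [h3.fderiv]
  rfl

lemma betaGrad_eq_fderiv {β : EuclideanSpace ℝ (Fin n) → EuclideanSpace ℝ (Fin n)}
    {f : ℝ × EuclideanSpace ℝ (Fin n) → ℝ} (hf : ContDiff ℝ 1 f)
    (t : ℝ) (x : EuclideanSpace ℝ (Fin n)) :
    betaGrad β f t x = ∑ i, β x i * fderiv ℝ f (t, x) (0, EuclideanSpace.single i 1) := by
  unfold betaGrad
  exact Finset.sum_congr rfl fun i _ => by rw [fderiv_sliceX hf]

lemma fderiv_sq_mul_sq {ϖ v : ℝ × EuclideanSpace ℝ (Fin n) → ℝ}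
    (hϖ : ContDiff ℝ 1 ϖ) (hv : ContDiff ℝ 1 v) (p u : ℝ × EuclideanSpace ℝ (Fin n)) :
    fderiv ℝ (fun q => ϖ q ^ 2 * v q ^ 2) p u
      = ϖ p ^ 2 * (2 * v p * fderiv ℝ v p u) + v p ^ 2 * (2 * ϖ p * fderiv ℝ ϖ p u) := by
  have hϖd := ((hϖ.differentiable one_ne_zero) p).hasFDerivAt
  have hvd := ((hv.differentiable one_ne_zero) p).hasFDerivAt
  have H : HasFDerivAt (fun q => ϖ q ^ 2 * v q ^ 2)
      ((ϖ p * ϖ p) • (v p • fderiv ℝ v p + v p • fderiv ℝ v p)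
        + (v p * v p) • (ϖ p • fderiv ℝ ϖ p + ϖ p • fderiv ℝ ϖ p)) p := by
    have := (hϖd.mul hϖd).mul (hvd.mul hvd)
    have e : (fun q => ϖ q ^ 2 * v q ^ 2) = fun q => ϖ q * ϖ q * (v q * v q) := by
      funext q; ring
    rw [e]; exact this
  rw [H.fderiv]
  simp [smul_eq_mul]
  ring
end helpers

/-- Weighted energy balance ∫₀ᵀ (Lv, ϖ²v) dt = ½‖v(T)‖_ϖ² − ½‖v(0)‖_ϖ² for a
weight ϖ transported along the characteristics of L = ∂ₜ + β·∇. -/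
theorem weighted_energy_identity {n : ℕ} (hn : 1 ≤ n) (T : ℝ) (hT : 0 < T)
    (β : EuclideanSpace ℝ (Fin n) → EuclideanSpace ℝ (Fin n))
    (hβ : ContDiff ℝ 1 β)
    (hdiv : ∀ x, ∑ i, fderiv ℝ (fun y => β y i) x (EuclideanSpace.single i 1) = 0)
    (ϖ : ℝ × EuclideanSpace ℝ (Fin n) → ℝ) (hϖ : ContDiff ℝ 1 ϖ)
    (hϖtrans : ∀ t x, partialT ϖ t x + betaGrad β ϖ t x = 0)
    (v : ℝ × EuclideanSpace ℝ (Fin n) → ℝ) (hv : ContDiff ℝ 1 v)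
    (K : Set (EuclideanSpace ℝ (Fin n))) (hK : IsCompact K)
    (hsupp : ∀ t ∈ Set.Icc (0:ℝ) T, ∀ x ∉ K, v (t, x) = 0) :
    (∫ t in (0:ℝ)..T, ∫ x,
        (partialT v t x + betaGrad β v t x) * (ϖ (t, x)) ^ 2 * v (t, x)) =
      (1/2) * (∫ x, (ϖ (T, x)) ^ 2 * (v (T, x)) ^ 2) -
        (1/2) * (∫ x, (ϖ (0, x)) ^ 2 * (v (0, x)) ^ 2) := by
  classical
  set w : ℝ × EuclideanSpace ℝ (Fin n) → ℝ := fun p => ϖ p ^ 2 * v p ^ 2 with hw_def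
  have hw : ContDiff ℝ 1 w := (hϖ.pow 2).mul (hv.pow 2)
  set h : ℝ → EuclideanSpace ℝ (Fin n) → ℝ :=
    fun t x => fderiv ℝ w (t, x) (1, 0) with hh_def
  set bg : ℝ → EuclideanSpace ℝ (Fin n) → ℝ :=
    fun t x => ∑ i, β x i * fderiv ℝ w (t, x) ((0:ℝ), EuclideanSpace.single i 1) with hbg_def
  have hDw : ∀ p u, fderiv ℝ w p u
      = ϖ p ^ 2 * (2 * v p * fderiv ℝ v p u) + v p ^ 2 * (2 * ϖ p * fderiv ℝ ϖ p u) :=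
    fun p u => fderiv_sq_mul_sq hϖ hv p u
  -- pointwise key identity
  have hkey : ∀ t x, (partialT v t x + betaGrad β v t x) * (ϖ (t, x)) ^ 2 * v (t, x)
      = (1/2) * (h t x + bg t x) := by
    intro t x
    have htrans := hϖtrans t x
    rw [partialT_eq_fderiv hϖ, betaGrad_eq_fderiv hϖ] at htrans
    rw [partialT_eq_fderiv hv, betaGrad_eq_fderiv hv]
    have e1 : h t x = ϖ (t,x) ^ 2 * (2 * v (t,x) * fderiv ℝ v (t,x) (1, 0))
        + v (t,x) ^ 2 * (2 * ϖ (t,x) * fderiv ℝ ϖ (t,x) (1, 0)) := hDw _ _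
    have e2 : bg t x = ϖ (t,x) ^ 2 * (2 * v (t,x)
          * ∑ i, β x i * fderiv ℝ v (t,x) ((0:ℝ), EuclideanSpace.single i 1))
        + v (t,x) ^ 2 * (2 * ϖ (t,x)
          * ∑ i, β x i * fderiv ℝ ϖ (t,x) ((0:ℝ), EuclideanSpace.single i 1)) := by
      have e3 : ∀ i ∈ Finset.univ, β x i * fderiv ℝ w (t,x) ((0:ℝ), EuclideanSpace.single i 1)
          = ϖ (t,x) ^ 2 * (2 * v (t,x))
              * (β x i * fderiv ℝ v (t,x) ((0:ℝ), EuclideanSpace.single i 1))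
            + v (t,x) ^ 2 * (2 * ϖ (t,x))
              * (β x i * fderiv ℝ ϖ (t,x) ((0:ℝ), EuclideanSpace.single i 1)) := by
        intro i _; rw [hDw]; ring
      calc bg t x = ∑ i, (ϖ (t,x) ^ 2 * (2 * v (t,x))
              * (β x i * fderiv ℝ v (t,x) ((0:ℝ), EuclideanSpace.single i 1))
            + v (t,x) ^ 2 * (2 * ϖ (t,x))
              * (β x i * fderiv ℝ ϖ (t,x) ((0:ℝ), EuclideanSpace.single i 1))) :=
          Finset.sum_congr rfl e3
        _ = _ := by
          rw [Finset.sum_add_distrib, ← Finset.mul_sum, ← Finset.mul_sum]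
          ring
    rw [e1, e2]
    linear_combination (-(v (t,x) ^ 2 * ϖ (t,x))) * htrans
  -- support facts
  have hz_w : ∀ t ∈ Set.Icc (0:ℝ) T, ∀ x ∉ K, w (t, x) = 0 := by
    intro t ht x hx; simp [hw_def, hsupp t ht x hx]
  have hz_h : ∀ t ∈ Set.Icc (0:ℝ) T, ∀ x ∉ K, h t x = 0 := by
    intro t ht x hx
    show fderiv ℝ w (t, x) (1, 0) = 0
    rw [hDw, hsupp t ht x hx]; ring
  have hz_term : ∀ t ∈ Set.Icc (0:ℝ) T, ∀ x ∉ K, ∀ i : Fin n,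
      β x i * fderiv ℝ w (t,x) ((0:ℝ), EuclideanSpace.single i 1) = 0 := by
    intro t ht x hx i
    rw [hDw, hsupp t ht x hx]; ring
  have hz_bg : ∀ t ∈ Set.Icc (0:ℝ) T, ∀ x ∉ K, bg t x = 0 := by
    intro t ht x hx
    exact Finset.sum_eq_zero fun i _ => hz_term t ht x hx i
  -- continuity facts
  have hfc : Continuous fun p : ℝ × EuclideanSpace ℝ (Fin n) => fderiv ℝ w p :=
    hw.continuous_fderiv one_ne_zero
  have hch : Continuous fun p : ℝ × EuclideanSpace ℝ (Fin n) => fderiv ℝ w p (1, 0) :=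
    hfc.clm_apply continuous_const
  have hslice : ∀ t : ℝ, Continuous fun x : EuclideanSpace ℝ (Fin n) => ((t, x) : ℝ × EuclideanSpace ℝ (Fin n)) :=
    fun t => continuous_const.prodMk continuous_id
  have hcwt : ∀ t, Continuous fun x => w (t, x) := fun t => hw.continuous.comp (hslice t)
  have hcht : ∀ t, Continuous (h t) := fun t => hch.comp (hslice t)
  have hcterm : ∀ (t : ℝ) (i : Fin n),
      Continuous fun x => β x i * fderiv ℝ w (t,x) ((0:ℝ), EuclideanSpace.single i 1) := by
    intro t i
    exact (((EuclideanSpace.proj i).continuous).comp hβ.continuous).mul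
      ((hfc.clm_apply continuous_const).comp (hslice t))
  have hcbg : ∀ t, Continuous (bg t) := fun t => continuous_finset_sum _ fun i _ => hcterm t i
  -- integrability helper
  have Ic : ∀ g : EuclideanSpace ℝ (Fin n) → ℝ, Continuous g → (∀ x ∉ K, g x = 0)
      → Integrable g := fun g hg h0 =>
    hg.integrable_of_hasCompactSupport (HasCompactSupport.intro hK h0)
  -- divergence-free integration by parts: ∫ bg t = 0
  have hIBP : ∀ t ∈ Set.Icc (0:ℝ) T, (∫ x, bg t x) = 0 := by
    intro t ht
    have hwt : Differentiable ℝ fun y => w (t, y) :=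
      (hw.differentiable one_ne_zero).comp ((differentiable_const t).prodMk differentiable_id)
    have hβi : ∀ i : Fin n, Differentiable ℝ fun y => β y i := fun i =>
      ((EuclideanSpace.proj (𝕜 := ℝ) i).differentiable).comp (hβ.differentiable one_ne_zero)
    have hfβ : ∀ (i : Fin n) (x), fderiv ℝ (fun y => β y i) x
        = (EuclideanSpace.proj (𝕜 := ℝ) i).comp (fderiv ℝ β x) := fun i x =>
      (((EuclideanSpace.proj (𝕜 := ℝ) i).hasFDerivAt).comp x
        ((hβ.differentiable one_ne_zero x).hasFDerivAt)).fderiv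
    have hcβ' : ∀ i : Fin n, Continuous fun x =>
        fderiv ℝ (fun y => β y i) x (EuclideanSpace.single i 1) := by
      intro i
      simp only [hfβ, ContinuousLinearMap.comp_apply]
      exact ((EuclideanSpace.proj (𝕜 := ℝ) i).continuous).comp
        ((hβ.continuous_fderiv one_ne_zero).clm_apply continuous_const)
    have hslicefd : ∀ (i : Fin n) (x : EuclideanSpace ℝ (Fin n)),
        fderiv ℝ (fun y => w (t, y)) x (EuclideanSpace.single i 1)
          = fderiv ℝ w (t, x) ((0:ℝ), EuclideanSpace.single i 1) := fun i x =>
      fderiv_sliceX hw t x _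
    have hint_term : ∀ i : Fin n, Integrable fun x =>
        β x i * fderiv ℝ w (t,x) ((0:ℝ), EuclideanSpace.single i 1) :=
      fun i => Ic _ (hcterm t i) (fun x hx => hz_term t ht x hx i)
    have hint_div : ∀ i : Fin n, Integrable fun x =>
        fderiv ℝ (fun y => β y i) x (EuclideanSpace.single i 1) * w (t, x) :=
      fun i => Ic _ ((hcβ' i).mul (hcwt t)) (fun x hx => by rw [hz_w t ht x hx, mul_zero])
    have hIBPi : ∀ i : Fin n,
        (∫ x, β x i * fderiv ℝ w (t,x) ((0:ℝ), EuclideanSpace.single i 1))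
          = - ∫ x, fderiv ℝ (fun y => β y i) x (EuclideanSpace.single i 1) * w (t, x) := by
      intro i
      have := integral_mul_fderiv_eq_neg_fderiv_mul_of_integrable (μ := volume)
        (f := fun y => β y i) (g := fun y => w (t, y)) (v := EuclideanSpace.single i 1)
        (hint_div i)
        (by simpa only [hslicefd] using hint_term i)
        (Ic _ ((((EuclideanSpace.proj i).continuous).comp hβ.continuous).mul (hcwt t))
          (fun x hx => by show _ * w (t, x) = 0; rw [hz_w t ht x hx, mul_zero]))
        (fun x _ => hβi i x) (fun x _ => hwt x)
      simpa only [hslicefd] using this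
    calc (∫ x, bg t x)
        = ∑ i, ∫ x, β x i * fderiv ℝ w (t,x) ((0:ℝ), EuclideanSpace.single i 1) :=
          integral_finset_sum Finset.univ fun i _ => hint_term i
      _ = ∑ i : Fin n, - ∫ x, fderiv ℝ (fun y => β y i) x (EuclideanSpace.single i 1) * w (t, x) :=
          Finset.sum_congr rfl fun i _ => hIBPi i
      _ = - ∫ x, ∑ i, fderiv ℝ (fun y => β y i) x (EuclideanSpace.single i 1) * w (t, x) := by
          rw [Finset.sum_neg_distrib, ← integral_finset_sum Finset.univ fun i _ => hint_div i]
      _ = 0 := by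
          have : ∀ x : EuclideanSpace ℝ (Fin n),
              (∑ i, fderiv ℝ (fun y => β y i) x (EuclideanSpace.single i 1) * w (t, x)) = 0 := by
            intro x
            rw [← Finset.sum_mul, hdiv x, zero_mul]
          simp only [this, integral_zero, neg_zero]
  -- inner integral identity
  have hinner : ∀ t ∈ Set.Icc (0:ℝ) T,
      (∫ x, (partialT v t x + betaGrad β v t x) * (ϖ (t, x)) ^ 2 * v (t, x))
        = (1/2) * ∫ x, h t x := by
    intro t ht
    have ih : Integrable (h t) := Ic _ (hcht t) (hz_h t ht)
    have ibg : Integrable (bg t) := Ic _ (hcbg t) (hz_bg t ht)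
    calc (∫ x, (partialT v t x + betaGrad β v t x) * (ϖ (t, x)) ^ 2 * v (t, x))
        = ∫ x, (1/2) * (h t x + bg t x) := by simp only [hkey]
      _ = (1/2) * ((∫ x, h t x) + ∫ x, bg t x) := by
          rw [integral_const_mul, integral_add ih ibg]
      _ = (1/2) * ∫ x, h t x := by rw [hIBP t ht, add_zero]
  -- Fubini
  have huncurry : Function.uncurry h = fun p : ℝ × EuclideanSpace ℝ (Fin n) => fderiv ℝ w p (1, 0) := rfl
  have hint : Integrable (Function.uncurry h) ((volume.restrict (Set.Ioc 0 T)).prod volume) := by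
    rw [Measure.restrict_prod_eq_prod_univ]
    apply IntegrableOn.mono_set (t := Set.Icc (0:ℝ) T ×ˢ Set.univ)
    swap
    · exact Set.prod_mono Set.Ioc_subset_Icc_self le_rfl
    have hS : IsCompact (Set.Icc (0:ℝ) T ×ˢ K) := isCompact_Icc.prod hK
    have hsub : Set.Icc (0:ℝ) T ×ˢ K ⊆ Set.Icc (0:ℝ) T ×ˢ (Set.univ : Set (EuclideanSpace ℝ (Fin n))) :=
      Set.prod_mono le_rfl (Set.subset_univ K)
    rw [← Set.union_diff_cancel hsub]
    apply IntegrableOn.union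
    · exact (huncurry ▸ hch).continuousOn.integrableOn_compact hS
    · have hEq : Set.EqOn (Function.uncurry h) 0
          ((Set.Icc (0:ℝ) T ×ˢ (Set.univ : Set (EuclideanSpace ℝ (Fin n))))
            \ (Set.Icc (0:ℝ) T ×ˢ K)) := by
        rintro ⟨t, x⟩ ⟨⟨ht, -⟩, hns⟩
        have hx : x ∉ K := fun hxK => hns ⟨ht, hxK⟩
        exact hz_h t ht x hx
      rw [integrableOn_congr_fun hEq
        (((measurableSet_Icc.prod MeasurableSet.univ)).diff
          (measurableSet_Icc.prod hK.isClosed.measurableSet))]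
      exact integrableOn_zero
  have hswap : (∫ t in (0:ℝ)..T, ∫ x, h t x) = ∫ x, ∫ t in Set.Ioc (0:ℝ) T, h t x := by
    rw [intervalIntegral.integral_of_le hT.le]
    exact MeasureTheory.integral_integral_swap hint
  -- FTC in time
  have hFTC : ∀ x, (∫ t in Set.Ioc (0:ℝ) T, h t x) = w (T, x) - w (0, x) := by
    intro x
    rw [← intervalIntegral.integral_of_le hT.le]
    exact intervalIntegral.integral_eq_sub_of_hasDerivAt
      (fun t _ => hasDerivAt_sliceT hw t x)
      ((hch.comp (continuous_id.prodMk continuous_const)).intervalIntegrable 0 T)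
  -- assemble
  have hTmem : T ∈ Set.Icc (0:ℝ) T := ⟨hT.le, le_rfl⟩
  have h0mem : (0:ℝ) ∈ Set.Icc (0:ℝ) T := ⟨le_rfl, hT.le⟩
  have iwT : Integrable fun x => w (T, x) := Ic _ (hcwt T) (hz_w T hTmem)
  have iw0 : Integrable fun x => w (0, x) := Ic _ (hcwt 0) (hz_w 0 h0mem)
  calc (∫ t in (0:ℝ)..T, ∫ x,
        (partialT v t x + betaGrad β v t x) * (ϖ (t, x)) ^ 2 * v (t, x))
      = ∫ t in (0:ℝ)..T, (1/2) * ∫ x, h t x := by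
        apply intervalIntegral.integral_congr
        intro t ht
        rw [Set.uIcc_of_le hT.le] at ht
        exact hinner t ht
    _ = (1/2) * ∫ t in (0:ℝ)..T, ∫ x, h t x := by
        rw [intervalIntegral.integral_const_mul]
    _ = (1/2) * ∫ x, (w (T, x) - w (0, x)) := by
        rw [hswap]
        congr 1
        exact integral_congr_ae (Filter.Eventually.of_forall hFTC)
    _ = (1/2) * ((∫ x, w (T, x)) - ∫ x, w (0, x)) := by
        rw [integral_sub iwT iw0]
    _ = (1/2) * (∫ x, (ϖ (T, x)) ^ 2 * (v (T, x)) ^ 2) -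
        (1/2) * (∫ x, (ϖ (0, x)) ^ 2 * (v (0, x)) ^ 2) := by
        simp only [hw_def]
        ring
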